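/- arXiv:1905.10682 — 8 statements merged into one kernel-verified Lean document; each statement's English description precedes it below -/
import Mathlib

section
/- Let H be a finite simple graph, p a prime, π an automorphism of H of order p, and H^π the subgraph of H induced by the fixed points of π. Then for every graph G, |Hom(G,H)| ≡ |Hom(G,H^π)| (mod p). -/
/-- If `π` is an automorphism of `H` of order `p`, then for every graph `G`,
`|Hom(G,H)| ≡ |Hom(G,H^π)| (mod p)`, where `H^π` is the induced subgraph on fixed points. -/
theorem stmt2 {VG VH : Type*} [Fintype VG] [Fintype VH]
    (G : SimpleGraph VG) (H : SimpleGraph VH) (p : ℕ) (hp : p.Prime)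
    (π : Equiv.Perm VH)
    (hauto : ∀ a b, H.Adj (π a) (π b) ↔ H.Adj a b)
    (horder : orderOf π = p) :
    (Nat.card (G →g H) : ZMod p)
      = (Nat.card (G →g H.induce {a : VH | π a = a}) : ZMod p) := by
  classical
  haveI : Fact p.Prime := ⟨hp⟩
  -- `π` as a graph automorphism
  let φ : H ≃g H := ⟨π, hauto _ _⟩
  -- forgetful monoid hom from Aut H to Perm VH
  let mh : (H ≃g H) →* Equiv.Perm VH := MonoidHom.mk' (fun e => e.toEquiv) (fun _ _ => rfl)
  have mh_inj : Function.Injective mh := fun e₁ e₂ h => by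
    ext x; exact congrArg (fun (e : Equiv.Perm VH) => e x) h
  have hφorder : orderOf φ = p := by
    rw [← horder]
    exact (orderOf_injective mh mh_inj φ).symm
  let K : Subgroup (H ≃g H) := Subgroup.zpowers φ
  have hK : IsPGroup p K := IsPGroup.of_card (by
    rw [Nat.card_zpowers, hφorder, pow_one])
  -- the action of K on homs
  letI : MulAction K (G →g H) :=
    { smul := fun σ f => ((σ : H ≃g H).toHom.comp f)
      one_smul := fun f => by ext x; rfl
      mul_smul := fun σ τ f => by ext x; rfl }
  have smul_apply : ∀ (σ : K) (f : G →g H) (x : VG),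
      (σ • f) x = (σ : H ≃g H) (f x) := fun _ _ _ => rfl
  haveI : Finite (G →g H) :=
    Finite.of_injective (fun f => (f : VG → VH)) (fun f g h => by ext x; exact congrFun h x)
  -- elements of K fix elements of the fixed-point set
  have hfix : ∀ (σ : K) (a : VH), π a = a → (mh (σ : H ≃g H)) a = a := by
    intro σ a ha
    have hπ : π ∈ MulAction.stabilizer (Equiv.Perm VH) a := by
      simpa [MulAction.mem_stabilizer_iff, Equiv.Perm.smul_def] using ha
    obtain ⟨n, hn⟩ := Subgroup.mem_zpowers_iff.mp σ.2
    have : mh (σ : H ≃g H) = π ^ n := by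
      rw [← hn, map_zpow]; rfl
    rw [this]
    have := Subgroup.zpow_mem _ hπ n
    simpa [MulAction.mem_stabilizer_iff, Equiv.Perm.smul_def] using this
  -- fixed points of the action are homs into the induced subgraph
  have e : MulAction.fixedPoints K (G →g H) ≃ (G →g H.induce {a : VH | π a = a}) :=
    { toFun := fun f =>
        { toFun := fun x => ⟨(f : G →g H) x, by
            have h1 := f.2 ⟨φ, Subgroup.mem_zpowers φ⟩
            have := congrArg (fun (g : G →g H) => g x) h1
            exact (by simpa [smul_apply] using this : φ ((f : G →g H) x) = (f : G →g H) x)⟩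
          map_rel' := fun h => (f : G →g H).map_rel h }
      invFun := fun g =>
        ⟨{ toFun := fun x => ((g x : {a : VH // π a = a}) : VH)
           map_rel' := fun h => g.map_rel h },
         by
          intro σ
          ext x
          exact hfix σ _ (g x).2⟩
      left_inv := fun f => by ext x; rfl
      right_inv := fun g => by ext x; rfl }
  have hmod := hK.card_modEq_card_fixedPoints (G →g H)
  rw [Nat.card_congr e] at hmod
  exact (ZMod.natCast_eq_natCast_iff _ _ _).mpr hmod
end

section
/- Let H be a finite tree that is not a star and has no automorphism of order p, where p is a prime. Then H has at least two distinct vertices α and β with deg(α) ≢ 1 (mod p) and deg(β) ≢ 1 (mod p). -/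
open SimpleGraph

section Aux

variable {V : Type*} [Fintype V] [DecidableEq V] (H : SimpleGraph V) [DecidableRel H.Adj]

/-- In a tree, paths between two vertices are unique. -/
lemma tree_unique_path (htree : H.IsTree) {a b : V} (q₁ q₂ : H.Walk a b)
    (h₁ : q₁.IsPath) (h₂ : q₂.IsPath) : q₁ = q₂ := by
  obtain ⟨P, -, hP⟩ := htree.existsUnique_path a b
  rw [hP q₁ h₁, hP q₂ h₂]

/-- If `c` is on a path `q` and `e` is any path with the same start ending at `c`,
then `q` starts with `e`. -/
lemma tree_take_eq (htree : H.IsTree) {a b c : V} (q : H.Walk a b) (hq : q.IsPath)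
    (hc : c ∈ q.support) (e : H.Walk a c) (he : e.IsPath) :
    ∃ d : H.Walk c b, e.append d = q := by
  have ht : (q.takeUntil c hc).IsPath := hq.takeUntil hc
  have heq := tree_unique_path H htree _ _ ht he
  exact ⟨q.dropUntil c hc, by rw [← heq]; exact q.take_spec hc⟩

/-- If `c` is on a path `q` and is adjacent to the start, `c` is the second vertex. -/
lemma tree_getVert_one (htree : H.IsTree) {a b c : V} (q : H.Walk a b) (hq : q.IsPath)
    (hc : c ∈ q.support) (hadj : H.Adj a c) : c = q.getVert 1 := by
  have he : (Walk.cons hadj Walk.nil : H.Walk a c).IsPath := by simp [hadj.ne]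
  obtain ⟨d, hd⟩ := tree_take_eq H htree q hq hc _ he
  rw [← hd]
  simp [Walk.cons_append, Walk.nil_append, Walk.getVert_cons_succ, Walk.getVert_zero]

/-- Every neighbour of the start of a maximum-length path is the second vertex. -/
lemma endpoint_nbr (htree : H.IsTree) {u v : V} (w : H.Walk u v) (hw : w.IsPath)
    (hmax : ∀ (a b : V) (w' : H.Walk a b), w'.IsPath → w'.length ≤ w.length)
    {z : V} (hz : H.Adj u z) : z = w.getVert 1 := by
  by_cases hzs : z ∈ w.support
  · exact tree_getVert_one H htree w hw hzs hz
  · have hP : (Walk.cons hz.symm w).IsPath := (Walk.cons_isPath_iff _ _).mpr ⟨hw, hzs⟩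
    have := hmax _ _ _ hP
    rw [Walk.length_cons] at this
    omega

/-- Every neighbour of the second vertex of a maximum-length path which is not the third
vertex is a leaf whose unique neighbour is the second vertex. -/
lemma second_nbr_leaf (htree : H.IsTree) {u x1 v : V} (h : H.Adj u x1) (q : H.Walk x1 v)
    (hw : (Walk.cons h q).IsPath)
    (hmax : ∀ (a b : V) (w' : H.Walk a b), w'.IsPath → w'.length ≤ q.length + 1)
    {z : V} (hz : H.Adj x1 z) (hz2 : z ≠ q.getVert 1) : ∀ y, H.Adj z y → y = x1 := by
  have hq : q.IsPath := ((Walk.cons_isPath_iff h q).mp hw).1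
  have hus : u ∉ q.support := ((Walk.cons_isPath_iff h q).mp hw).2
  have hmax' : ∀ (a b : V) (w' : H.Walk a b), w'.IsPath → w'.length ≤ (Walk.cons h q).length :=
    by simpa [Walk.length_cons] using hmax
  have hzs : z ∉ q.support := by
    intro hzq
    exact hz2 (tree_getVert_one H htree q hq hzq hz)
  intro y hy
  by_contra hyx
  have hyu : y ≠ u := by
    intro h'
    subst h'
    have : z = (Walk.cons h q).getVert 1 :=
      endpoint_nbr H htree _ hw hmax' hy.symm
    rw [Walk.getVert_cons_succ, Walk.getVert_zero] at this
    exact hz.ne' this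
  have hyq : y ∉ q.support := by
    intro hyq
    have he : (Walk.cons hz (Walk.cons hy Walk.nil) : H.Walk x1 y).IsPath := by
      simp [hz.ne, hy.ne, Ne.symm hyx]
    obtain ⟨d, hd⟩ := tree_take_eq H htree q hq hyq _ he
    apply hz2
    rw [← hd]
    simp [Walk.cons_append, Walk.getVert_cons_succ, Walk.getVert_zero]
  have hW : (Walk.cons hy.symm (Walk.cons hz.symm q)).IsPath := by
    rw [Walk.cons_isPath_iff]
    refine ⟨(Walk.cons_isPath_iff _ _).mpr ⟨hq, hzs⟩, ?_⟩
    rw [Walk.support_cons]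
    simp only [List.mem_cons, not_or]
    exact ⟨hy.ne', hyq⟩
  have := hmax _ _ _ hW
  simp [Walk.length_cons] at this

/-- From `p` leaves attached to a common vertex, build an automorphism of order `p`. -/
lemma auto_of_leaves {p : ℕ} (hp : p.Prime) (v : V) (s : Finset V) (hcard : s.card = p)
    (hleaf : ∀ l ∈ s, ∀ z : V, H.Adj l z ↔ z = v) :
    ∃ π : Equiv.Perm V, (∀ a b, H.Adj (π a) (π b) ↔ H.Adj a b) ∧ orderOf π = p := by
  classical
  set l := s.toList with hl
  have hnd : l.Nodup := s.nodup_toList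
  have hlen : l.length = p := by rw [hl, Finset.length_toList, hcard]
  have h2 : 2 ≤ l.length := by rw [hlen]; exact hp.two_le
  set π := l.formPerm with hπ
  have hmem : ∀ x : V, x ∈ l ↔ x ∈ s := fun x => Finset.mem_toList
  have hfix : ∀ x ∉ s, π x = x := fun x hx =>
    List.formPerm_apply_of_notMem (by simpa [hmem] using hx)
  have hmaps : ∀ x ∈ s, π x ∈ s := fun x hx => by
    have := List.formPerm_apply_mem_of_mem (x := x) (l := l) ((hmem x).mpr hx)
    exact (hmem _).mp this
  have hfix' : ∀ x ∉ s, π⁻¹ x = x := fun x hx => by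
    conv_lhs => rw [← hfix x hx]
    simp
  have hmaps' : ∀ x ∈ s, π⁻¹ x ∈ s := fun x hx => by
    by_contra hmem'
    have h1 := hfix _ hmem'
    rw [show π (π⁻¹ x) = x from Equiv.apply_symm_apply π x] at h1
    exact hmem' (h1 ▸ hx)
  have hv : v ∉ s := fun hvs => H.loopless.irrefl v ((hleaf v hvs v).mpr rfl)
  have key : ∀ f : V → V, (∀ x ∉ s, f x = x) → (∀ x ∈ s, f x ∈ s) →
      ∀ a b, H.Adj a b → H.Adj (f a) (f b) := by
    intro f hf hfs a b hab
    by_cases ha : a ∈ s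
    · have hb : b = v := (hleaf a ha b).mp hab
      rw [hb, hf v hv]
      exact (hleaf (f a) (hfs a ha) v).mpr rfl
    · by_cases hb : b ∈ s
      · have ha' : a = v := (hleaf b hb a).mp hab.symm
        rw [ha', hf v hv]
        exact ((hleaf (f b) (hfs b hb) v).mpr rfl).symm
      · rw [hf a ha, hf b hb]; exact hab
  refine ⟨π, fun a b => ⟨fun hadj => ?_, key π hfix hmaps a b⟩, ?_⟩
  · have := key (⇑(π⁻¹)) hfix' hmaps' _ _ hadj
    simpa using this
  · have hc : π.IsCycle := List.isCycle_formPerm hnd h2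
    have hne : ∀ x : V, l ≠ [x] := by
      intro x hx
      rw [hx] at hlen
      simp at hlen
      have := hp.one_lt
      omega
    rw [hc.orderOf, List.support_formPerm_of_nodup l hnd hne, hl, Finset.toList_toFinset, hcard]

/-- The second vertex of a maximum-length path of length ≥ 3 has degree ≢ 1 mod p,
unless there is an automorphism of order p. -/
lemma degree_second (htree : H.IsTree) {p : ℕ} (hp : p.Prime)
    (hnoauto : ¬∃ π : Equiv.Perm V,
      (∀ a b, H.Adj (π a) (π b) ↔ H.Adj a b) ∧ orderOf π = p)
    {u v : V} (w : H.Walk u v) (hw : w.IsPath)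
    (hmax : ∀ (a b : V) (w' : H.Walk a b), w'.IsPath → w'.length ≤ w.length)
    (hlen : 3 ≤ w.length) :
    H.Adj u (w.getVert 1) ∧ (H.degree (w.getVert 1) : ZMod p) ≠ 1 := by
  classical
  cases w with
  | nil => simp at hlen
  | @cons _ x1 _ h q =>
    rw [Walk.getVert_cons_succ, Walk.getVert_zero]
    refine ⟨h, ?_⟩
    have hq : q.IsPath := ((Walk.cons_isPath_iff h q).mp hw).1
    have hus : u ∉ q.support := ((Walk.cons_isPath_iff h q).mp hw).2
    have hqlen : 2 ≤ q.length := by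
      rw [Walk.length_cons] at hlen; omega
    have hmax' : ∀ (a b : V) (w' : H.Walk a b), w'.IsPath → w'.length ≤ q.length + 1 := by
      simpa [Walk.length_cons] using hmax
    set x2 := q.getVert 1 with hx2
    have hx2s : x2 ∈ q.support :=
      Walk.mem_support_iff_exists_getVert.mpr ⟨1, rfl, by omega⟩
    have hadj12 : H.Adj x1 x2 := by
      have := q.adj_getVert_succ (i := 0) (by omega)
      rwa [Walk.getVert_zero] at this
    have hx2mem : x2 ∈ H.neighborFinset x1 := (H.mem_neighborFinset _ _).mpr hadj12
    set L : Finset V := (H.neighborFinset x1).erase x2 with hL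
    have hleaf : ∀ z ∈ L, ∀ y : V, H.Adj z y ↔ y = x1 := by
      intro z hzL y
      have hz2 : z ≠ x2 := Finset.ne_of_mem_erase hzL
      have hzadj : H.Adj x1 z :=
        (H.mem_neighborFinset _ _).mp (Finset.mem_of_mem_erase hzL)
      constructor
      · exact fun hy => second_nbr_leaf H htree h q hw hmax' hzadj hz2 y hy
      · rintro rfl; exact hzadj.symm
    intro hdeg
    have hcardL : L.card = H.degree x1 - 1 := by
      rw [hL, Finset.card_erase_of_mem hx2mem]
      rfl
    have hdegpos : 1 ≤ H.degree x1 := by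
      rw [← H.card_neighborFinset_eq_degree]
      exact Finset.card_pos.mpr ⟨x2, hx2mem⟩
    have huL : u ∈ L := by
      refine Finset.mem_erase.mpr ⟨?_, (H.mem_neighborFinset _ _).mpr h.symm⟩
      intro hu
      exact hus (hu ▸ hx2s)
    have hLpos : 1 ≤ L.card := Finset.card_pos.mpr ⟨u, huL⟩
    have hcast : ((L.card : ℕ) : ZMod p) = 0 := by
      rw [hcardL, Nat.cast_sub hdegpos, hdeg]
      simp
    have hdvd : p ∣ L.card := (ZMod.natCast_eq_zero_iff _ _).mp hcast
    have hple : p ≤ L.card := Nat.le_of_dvd (by omega) hdvd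
    obtain ⟨s, hs, hscard⟩ := Finset.exists_subset_card_eq hple
    refine hnoauto (auto_of_leaves H hp x1 s hscard ?_)
    exact fun l hl z => hleaf l (hs hl) z

/-- A tree whose maximum-length path has length ≤ 2 is a star. -/
lemma star_of_short (htree : H.IsTree) {u v : V} (w : H.Walk u v) (hw : w.IsPath)
    (hmax : ∀ (a b : V) (w' : H.Walk a b), w'.IsPath → w'.length ≤ w.length)
    (hlen : w.length ≤ 2) :
    ∃ c : V, ∀ a b : V, H.Adj a b ↔ ((a = c ∧ b ≠ c) ∨ (b = c ∧ a ≠ c)) := by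
  classical
  by_cases hk0 : w.length = 0
  · have hall : ∀ a : V, a = u := by
      intro a
      obtain ⟨t0⟩ := htree.isConnected.preconnected u a
      have ht := t0.toPath.prop
      have := hmax _ _ _ ht
      rw [hk0] at this
      have := Walk.eq_of_length_eq_zero (Nat.le_zero.mp this)
      exact this.symm
    refine ⟨u, fun a b => ?_⟩
    rw [hall a, hall b]
    simp
  · -- length ≥ 1
    have hk1 : 1 ≤ w.length := by omega
    set c := w.getVert 1 with hc
    have hA : H.Adj u c := by
      have := w.adj_getVert_succ (i := 0) (by omega)
      rwa [Walk.getVert_zero] at this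
    have hUleaf : ∀ z, H.Adj u z → z = c := fun z hz => endpoint_nbr H htree w hw hmax hz
    have hQ : ∀ a : V, a ≠ c → H.Adj c a ∧ ∀ z, H.Adj a z → z = c := by
      intro a ha
      obtain ⟨t0⟩ := htree.isConnected.preconnected c a
      obtain ⟨t, ht⟩ := t0.toPath
      have htpos : 1 ≤ t.length := by
        rcases Nat.eq_zero_or_pos t.length with h0 | h1
        · exact absurd (Walk.eq_of_length_eq_zero h0) ha.symm
        · exact h1
      have htlen : t.length ≤ 1 := by
        by_contra hgt
        push_neg at hgt
        have hut : u ∉ t.support := by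
          intro hut
          have he : (Walk.cons hA.symm Walk.nil : H.Walk c u).IsPath := by simp [hA.ne']
          obtain ⟨d, hd⟩ := tree_take_eq H htree t ht hut _ he
          have hd' : t = Walk.cons hA.symm d := by
            rw [← hd]; simp [Walk.cons_append, Walk.nil_append]
          have hdp : d.IsPath ∧ c ∉ d.support := by
            have := ht
            rw [hd'] at this
            exact (Walk.cons_isPath_iff _ _).mp this
          have hdlen : 1 ≤ d.length := by
            have : t.length = d.length + 1 := by rw [hd']; rw [Walk.length_cons]
            omega
          have hadj : H.Adj u (d.getVert 1) := by
            have := d.adj_getVert_succ (i := 0) (by omega)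
            rwa [Walk.getVert_zero] at this
          have h1 : d.getVert 1 = c := hUleaf _ hadj
          have : d.getVert 1 ∈ d.support :=
            Walk.mem_support_iff_exists_getVert.mpr ⟨1, rfl, by omega⟩
          rw [h1] at this
          exact hdp.2 this
        have hW : (Walk.cons hA t).IsPath := (Walk.cons_isPath_iff _ _).mpr ⟨ht, hut⟩
        have := hmax _ _ _ hW
        rw [Walk.length_cons] at this
        omega
      have hAca : H.Adj c a := by
        cases t with
        | nil => simp at htpos
        | cons h' t' =>
          rw [Walk.length_cons] at htlen
          have := Walk.eq_of_length_eq_zero (Nat.le_zero.mp (by omega : t'.length ≤ 0))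
          exact this ▸ h'
      refine ⟨hAca, fun z hz => ?_⟩
      by_contra hzc
      have hua : u ≠ a := by
        intro h'
        subst h'
        exact hzc (hUleaf z hz)
      have huz : u ≠ z := by
        intro h'
        subst h'
        exact ha (hUleaf a hz.symm)
      have hW : (Walk.cons hA (Walk.cons hAca (Walk.cons hz Walk.nil))).IsPath := by
        simp [hA.ne, hAca.ne, hz.ne, hua, huz, ha, Ne.symm hzc]
      have h3 := hmax _ _ _ hW
      rw [Walk.length_cons, Walk.length_cons, Walk.length_cons, Walk.length_nil] at h3
      omega
    refine ⟨c, fun a b => ⟨fun hab => ?_, fun hab => ?_⟩⟩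
    · by_cases hac : a = c
      · exact Or.inl ⟨hac, fun hbc => H.loopless.irrefl c (by rwa [hac, hbc] at hab)⟩
      · exact Or.inr ⟨(hQ a hac).2 b hab, hac⟩
    · rcases hab with ⟨rfl, hbc⟩ | ⟨rfl, hac⟩
      · exact (hQ b hbc).1
      · exact ((hQ a hac).1).symm

end Aux

/-- A finite tree that is not a star and has no automorphism of order `p` has at least two
distinct vertices of degree ≢ 1 (mod p). -/
theorem stmt3 {V : Type*} [Fintype V] [DecidableEq V]
    (H : SimpleGraph V) [DecidableRel H.Adj] (p : ℕ) (hp : p.Prime)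
    (htree : H.IsTree)
    (hnotstar : ¬∃ c : V, ∀ a b : V, H.Adj a b ↔ ((a = c ∧ b ≠ c) ∨ (b = c ∧ a ≠ c)))
    (hnoauto : ¬∃ π : Equiv.Perm V,
      (∀ a b, H.Adj (π a) (π b) ↔ H.Adj a b) ∧ orderOf π = p) :
    ∃ α β : V, α ≠ β ∧ (H.degree α : ZMod p) ≠ 1 ∧ (H.degree β : ZMod p) ≠ 1 := by
  classical
  obtain ⟨x⟩ := htree.isConnected.nonempty
  set N := Fintype.card V with hN
  set P : ℕ → Prop := fun n => ∃ (a b : V) (w : H.Walk a b), w.IsPath ∧ w.length = n with hP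
  have hP0 : P 0 := ⟨x, x, Walk.nil, Walk.IsPath.nil, rfl⟩
  have hPspec : P (Nat.findGreatest P N) := Nat.findGreatest_spec (Nat.zero_le N) hP0
  obtain ⟨a, b, w, hw, hwl⟩ := hPspec
  have hmax : ∀ (a' b' : V) (w' : H.Walk a' b'), w'.IsPath → w'.length ≤ w.length := by
    intro a' b' w' hw'
    rw [hwl]
    by_contra hlt
    push_neg at hlt
    exact Nat.findGreatest_is_greatest hlt (le_of_lt hw'.length_lt) ⟨a', b', w', hw', rfl⟩
  by_cases hlen : w.length ≤ 2
  · exact absurd (star_of_short H htree w hw hmax hlen) hnotstar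
  · push_neg at hlen
    obtain ⟨hA1, hd1⟩ := degree_second H htree hp hnoauto w hw hmax (by omega)
    have hmaxr : ∀ (a' b' : V) (w' : H.Walk a' b'), w'.IsPath →
        w'.length ≤ w.reverse.length := by
      simpa [Walk.length_reverse] using hmax
    obtain ⟨hA2, hd2⟩ := degree_second H htree hp hnoauto w.reverse hw.reverse hmaxr
      (by rw [Walk.length_reverse]; omega)
    refine ⟨w.getVert 1, w.reverse.getVert 1, ?_, hd1, hd2⟩
    intro hEq
    rw [← hEq] at hA2
    have hab : a ≠ b := by
      intro h'
      subst h'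
      have h0 := congrArg Walk.length ((Walk.isPath_iff_eq_nil (p := w)).mp hw)
      simp only [Walk.length_nil] at h0
      omega
    have ht : (Walk.cons hA1 (Walk.cons hA2.symm Walk.nil) : H.Walk a b).IsPath := by
      simp [hA1.ne, hA2.ne', hab]
    have := tree_unique_path H htree _ w ht hw
    have hlen2 := congrArg Walk.length this
    rw [Walk.length_cons, Walk.length_cons, Walk.length_nil] at hlen2
    omega
end

section
/- Let H be a square-free graph and let γ₀ γ₁ ⋯ γ_k be a non-consecutive walk in H (i.e., γ_{i-1} ≠ γ_{i+1} for all i). Let K be the path s v₁ ⋯ v_{k-1} t together with pendant vertices u₁,…,u_{k-1} where u_i is adjacent to v_i. Then every homomorphism σ : K → H with σ(u_i) = γ_i for all i and σ(s) ∈ N(γ₀) \ {γ₁} satisfies σ(v_i) = γ_{i-1} for all i ∈ [k-1]. -/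
/-- Shifting lemma: for a square-free `H` and an nc-walk `γ₀ … γ_k`, any homomorphism of the
path gadget (path `s v₁ … v_{k-1} t` with pendant `u_i` pinned to `γ_i`) sending `s` into
`N(γ₀) \ {γ₁}` satisfies `σ(v_i) = γ_{i-1}` for all `i ∈ [k-1]`. -/
theorem stmt5 {V : Type*} [Fintype V]
    (H : SimpleGraph V)
    (hsf : ∀ a b c d : V, a ≠ b → b ≠ c → c ≠ d → d ≠ a → a ≠ c → b ≠ d →
      ¬(H.Adj a b ∧ H.Adj b c ∧ H.Adj c d ∧ H.Adj d a))
    (k : ℕ) (hk : 1 ≤ k)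
    (γ : ℕ → V)
    (hwalk : ∀ i < k, H.Adj (γ i) (γ (i + 1)))
    (hnc : ∀ i, 1 ≤ i → i + 1 ≤ k → γ (i - 1) ≠ γ (i + 1))
    (σ : ℕ → V)
    (hadj : ∀ i < k, H.Adj (σ i) (σ (i + 1)))
    (hpin : ∀ i, 1 ≤ i → i + 1 ≤ k → H.Adj (σ i) (γ i))
    (hs : H.Adj (γ 0) (σ 0)) (hs1 : σ 0 ≠ γ 1) :
    ∀ i, 1 ≤ i → i + 1 ≤ k → σ i = γ (i - 1) := by
  intro i hi1
  induction i, hi1 using Nat.le_induction with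
  | base =>
    intro h2k
    -- show σ 1 = γ 0
    by_contra hne
    have e1 : H.Adj (γ 0) (σ 0) := hs
    have e2 : H.Adj (σ 0) (σ 1) := hadj 0 (by omega)
    have e3 : H.Adj (σ 1) (γ 1) := hpin 1 le_rfl h2k
    have e4 : H.Adj (γ 1) (γ 0) := (hwalk 0 (by omega)).symm
    exact hsf (γ 0) (σ 0) (σ 1) (γ 1) e1.ne e2.ne e3.ne e4.ne
      (fun h => hne (by simpa using h.symm)) hs1 ⟨e1, e2, e3, e4⟩
  | succ n hn ih =>
    intro hk2
    have hσn : σ n = γ (n - 1) := ih (by omega)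
    have hn1 : n - 1 + 1 = n := by omega
    by_contra hne
    have hne' : σ (n + 1) ≠ γ n := by simpa using hne
    have e1 : H.Adj (γ (n - 1)) (σ (n + 1)) := hσn ▸ hadj n (by omega)
    have e2 : H.Adj (σ (n + 1)) (γ (n + 1)) := hpin (n + 1) (by omega) (by omega)
    have e3 : H.Adj (γ (n + 1)) (γ n) := (hwalk n (by omega)).symm
    have e4 : H.Adj (γ n) (γ (n - 1)) := by
      have := hwalk (n - 1) (by omega)
      rw [hn1] at this
      exact this.symm
    exact hsf (γ (n - 1)) (σ (n + 1)) (γ (n + 1)) (γ n) e1.ne e2.ne e3.ne e4.ne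
      (hnc n hn (by omega)) hne' ⟨e1, e2, e3, e4⟩
end

section
/- Let H be a square-free graph, W = γ₀ γ₁ ⋯ γ_k an nc-walk in H with k ≥ 1, and K the gadget path s v₁ ⋯ v_{k-1} t with pendant u_i pinned to γ_i. Then for any ω_s ∈ N(γ₀) \ {γ₁} and ω_t ∈ N(γ_k) \ {γ_{k-1}}, there is no homomorphism σ : K → H with σ(u_i) = γ_i for all i, σ(s) = ω_s, and σ(t) = ω_t. -/
/-- For the path gadget on an nc-walk `γ₀ … γ_k` in a square-free graph, there is no
homomorphism sending `s` to `ω_s ∈ N(γ₀) \ {γ₁}` and `t` to `ω_t ∈ N(γ_k) \ {γ_{k-1}}`. -/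
theorem stmt6 {V : Type*} [Fintype V]
    (H : SimpleGraph V)
    (hsf : ∀ a b c d : V, a ≠ b → b ≠ c → c ≠ d → d ≠ a → a ≠ c → b ≠ d →
      ¬(H.Adj a b ∧ H.Adj b c ∧ H.Adj c d ∧ H.Adj d a))
    (k : ℕ) (hk : 1 ≤ k)
    (γ : ℕ → V)
    (hwalk : ∀ i < k, H.Adj (γ i) (γ (i + 1)))
    (hnc : ∀ i, 1 ≤ i → i + 1 ≤ k → γ (i - 1) ≠ γ (i + 1))
    (ωs ωt : V)
    (hωs : H.Adj (γ 0) ωs) (hωs1 : ωs ≠ γ 1)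
    (hωt : H.Adj (γ k) ωt) (hωt1 : ωt ≠ γ (k - 1)) :
    ¬∃ σ : ℕ → V,
      (∀ i < k, H.Adj (σ i) (σ (i + 1))) ∧
      (∀ i, 1 ≤ i → i + 1 ≤ k → H.Adj (σ i) (γ i)) ∧
      σ 0 = ωs ∧ σ k = ωt := by
  rintro ⟨σ, hadj, hpin, hs, ht⟩
  have key : ∀ i, 1 ≤ i → i + 1 ≤ k → σ i = γ (i - 1) := by
    intro i h1 h2
    induction i with
    | zero => omega
    | succ j ih =>
      rcases Nat.eq_zero_or_pos j with hj | hj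
      · subst hj
        have e1 : H.Adj ωs (σ 1) := by
          have := hadj 0 (by omega); rwa [hs] at this
        have e2 : H.Adj (σ 1) (γ 1) := hpin 1 le_rfl h2
        have e3 : H.Adj (γ 1) (γ 0) := (hwalk 0 (by omega)).symm
        by_contra hne
        exact hsf ωs (σ 1) (γ 1) (γ 0) e1.ne e2.ne e3.ne hωs.ne hωs1
          (fun h => hne h) ⟨e1, e2, e3, hωs⟩
      · have ihyp : σ j = γ (j - 1) := ih hj (by omega)
        have hj1 : j - 1 + 1 = j := by omega
        have e1 : H.Adj (γ (j - 1)) (σ (j + 1)) := by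
          have := hadj j (by omega); rwa [ihyp] at this
        have e2 : H.Adj (σ (j + 1)) (γ (j + 1)) := hpin (j + 1) h1 h2
        have e3 : H.Adj (γ (j + 1)) (γ j) := (hwalk j (by omega)).symm
        have e4 : H.Adj (γ j) (γ (j - 1)) := by
          have := hwalk (j - 1) (by omega); rw [hj1] at this; exact this.symm
        have hac : γ (j - 1) ≠ γ (j + 1) := hnc j hj (by omega)
        by_contra hne
        have hbd : σ (j + 1) ≠ γ j := by
          intro h; exact hne (by simpa using h)
        exact hsf (γ (j - 1)) (σ (j + 1)) (γ (j + 1)) (γ j)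
          e1.ne e2.ne e3.ne e4.ne hac hbd ⟨e1, e2, e3, e4⟩
  rcases Nat.lt_or_ge k 2 with hk2 | hk2
  · have hk1 : k = 1 := by omega
    subst hk1
    have e1 : H.Adj ωs ωt := by
      have := hadj 0 (by omega); rwa [hs, ht] at this
    have e2 : H.Adj ωt (γ 1) := hωt.symm
    have e3 : H.Adj (γ 1) (γ 0) := (hwalk 0 (by omega)).symm
    have hωt0 : ωt ≠ γ 0 := by simpa using hωt1
    exact hsf ωs ωt (γ 1) (γ 0) e1.ne e2.ne e3.ne hωs.ne hωs1 hωt0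
      ⟨e1, e2, e3, hωs⟩
  · have hσ : σ (k - 1) = γ (k - 2) := by
      have := key (k - 1) (by omega) (by omega)
      simpa [Nat.sub_sub] using this
    have hk11 : k - 1 + 1 = k := by omega
    have hk21 : k - 2 + 1 = k - 1 := by omega
    have e1 : H.Adj (γ (k - 2)) ωt := by
      have := hadj (k - 1) (by omega)
      rwa [hσ, hk11, ht] at this
    have e3 : H.Adj (γ k) (γ (k - 1)) := by
      have := hwalk (k - 1) (by omega); rw [hk11] at this; exact this.symm
    have e4 : H.Adj (γ (k - 1)) (γ (k - 2)) := by
      have := hwalk (k - 2) (by omega); rw [hk21] at this; exact this.symm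
    have hac : γ (k - 2) ≠ γ k := by
      have := hnc (k - 1) (by omega) (by omega)
      rw [hk11] at this
      simpa [Nat.sub_sub] using this
    exact hsf (γ (k - 2)) ωt (γ k) (γ (k - 1)) e1.ne hωt.symm.ne e3.ne e4.ne
      hac hωt1 ⟨e1, hωt.symm, e3, e4⟩
end

section
/- Let H be a square-free graph, W = γ₀ γ₁ ⋯ γ_k an nc-walk in H with k ≥ 1, and K the gadget path s v₁ ⋯ v_{k-1} t with pendant u_i pinned to γ_i. Then for any ω_t ∈ N(γ_k) \ {γ_{k-1}}, there is exactly one homomorphism σ : K → H with σ(u_i) = γ_i for all i, σ(s) = γ₁, and σ(t) = ω_t. -/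
/-- For the path gadget on an nc-walk `γ₀ … γ_k` in a square-free graph and any
`ω_t ∈ N(γ_k) \ {γ_{k-1}}`, there is exactly one homomorphism with `σ(s) = γ₁` and
`σ(t) = ω_t`. -/
theorem stmt7 {V : Type*} [Fintype V]
    (H : SimpleGraph V)
    (hsf : ∀ a b c d : V, a ≠ b → b ≠ c → c ≠ d → d ≠ a → a ≠ c → b ≠ d →
      ¬(H.Adj a b ∧ H.Adj b c ∧ H.Adj c d ∧ H.Adj d a))
    (k : ℕ) (hk : 1 ≤ k)
    (γ : ℕ → V)
    (hwalk : ∀ i < k, H.Adj (γ i) (γ (i + 1)))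
    (hnc : ∀ i, 1 ≤ i → i + 1 ≤ k → γ (i - 1) ≠ γ (i + 1))
    (ωt : V) (hωt : H.Adj (γ k) ωt) (hωt1 : ωt ≠ γ (k - 1)) :
    ∃! σ : Fin (k + 1) → V,
      (∀ i : ℕ, (h : i < k) →
        H.Adj (σ ⟨i, by omega⟩) (σ ⟨i + 1, by omega⟩)) ∧
      (∀ i : ℕ, 1 ≤ i → (h : i + 1 ≤ k) → H.Adj (σ ⟨i, by omega⟩) (γ i)) ∧
      σ 0 = γ 1 ∧ σ ⟨k, by omega⟩ = ωt := by
  classical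
  set σ₀ : Fin (k + 1) → V := fun i => if (i : ℕ) = k then ωt else γ ((i : ℕ) + 1) with hσ₀
  refine ⟨σ₀, ⟨?_, ?_, ?_, ?_⟩, ?_⟩
  · intro i h
    simp only [hσ₀]
    rw [if_neg (by omega : ¬ i = k)]
    by_cases h2 : i + 1 = k
    · rw [if_pos h2, h2]
      exact hωt
    · rw [if_neg h2]
      exact hwalk (i + 1) (by omega)
  · intro i h1 h2
    simp only [hσ₀]
    rw [if_neg (by omega : ¬ i = k)]
    exact (hwalk i (by omega)).symm
  · simp only [hσ₀]
    rw [if_neg (by simpa using (by omega : ¬ (0 : ℕ) = k))]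
    simp
  · simp only [hσ₀]
    simp
  -- uniqueness
  intro τ ⟨hpath, hpend, h0, hend⟩
  have feq : ∀ {a b : ℕ} (h1 : a < k + 1) (h2 : b < k + 1), a = b →
      τ ⟨a, h1⟩ = τ ⟨b, h2⟩ := by
    intro a b h1 h2 h
    subst h
    rfl
  have hzero : ∀ (h : 0 < k + 1), τ ⟨0, h⟩ = γ 1 := by
    intro h
    have : (⟨0, h⟩ : Fin (k + 1)) = 0 := by
      ext
      simp
    rw [this, h0]
  -- end lemma: τ (k-1) = γ k  (for k ≥ 2)
  have hE : 2 ≤ k → τ ⟨k - 1, by omega⟩ = γ k := by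
    intro hk2
    by_contra hne
    have h1 : H.Adj (τ ⟨k - 1, by omega⟩) (γ (k - 1)) := hpend (k - 1) (by omega) (by omega)
    have h2' : H.Adj (τ ⟨k - 1, by omega⟩) (τ ⟨k - 1 + 1, by omega⟩) := hpath (k - 1) (by omega)
    have h2 : H.Adj (τ ⟨k - 1, by omega⟩) ωt := by
      rw [feq (by omega) (by omega) (by omega : k - 1 + 1 = k), hend] at h2'
      exact h2'
    have hwk : H.Adj (γ (k - 1)) (γ k) := by
      have := hwalk (k - 1) (by omega)
      rwa [show k - 1 + 1 = k by omega] at this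
    exact hsf (γ (k - 1)) (τ ⟨k - 1, by omega⟩) ωt (γ k)
      h1.ne' h2.ne hωt.symm.ne hwk.symm.ne (Ne.symm hωt1) hne
      ⟨h1.symm, h2, hωt.symm, hwk.symm⟩
  -- downward induction
  have key : ∀ j, ∀ m, m + j + 1 = k → ∀ (h : m < k + 1), τ ⟨m, h⟩ = γ (m + 1) := by
    intro j
    induction j with
    | zero =>
      intro m hm h
      rcases Nat.lt_or_ge k 2 with h1k | h2k
      · -- k = 1, m = 0
        have hm0 : m = 0 := by omega
        subst hm0
        rw [hzero h]
      · have hE' := hE h2k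
        rw [feq h (by omega) (by omega : m = k - 1), hE']
        rw [show m + 1 = k by omega]
    | succ j ih =>
      intro m hm h
      rcases Nat.eq_zero_or_pos m with hm0 | hm1
      · subst hm0
        exact hzero h
      · have ihm := ih (m + 1) (by omega) (by omega)
        by_cases hgood : τ ⟨m, h⟩ = γ (m + 1)
        · exact hgood
        · exfalso
          by_cases hb : τ ⟨m + 1, by omega⟩ = γ m
          · have hne := hnc (m + 1) (by omega) (by omega)
            simp only [Nat.add_sub_cancel] at hne
            exact hne (hb ▸ ihm ▸ rfl)
          · have e1 : H.Adj (τ ⟨m, h⟩) (γ m) := hpend m hm1 (by omega)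
            have e2 : H.Adj (τ ⟨m, h⟩) (τ ⟨m + 1, by omega⟩) := hpath m (by omega)
            have e3 : H.Adj (τ ⟨m + 1, by omega⟩) (γ (m + 1)) := hpend (m + 1) (by omega) (by omega)
            have e4 : H.Adj (γ m) (γ (m + 1)) := hwalk m (by omega)
            exact hsf (γ m) (τ ⟨m, h⟩) (τ ⟨m + 1, by omega⟩) (γ (m + 1))
              e1.ne' e2.ne e3.ne e4.symm.ne (fun hc => hb hc.symm) hgood
              ⟨e1.symm, e2, e3, e4.symm⟩
  funext i
  obtain ⟨iv, hi⟩ := i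
  simp only [hσ₀]
  by_cases hik : iv = k
  · rw [if_pos hik, feq hi (by omega) hik, hend]
  · rw [if_neg hik]
    exact key (k - 1 - iv) iv (by omega) hi
end

section
/- Let H be a square-free graph and C = θ γ₁ γ₂ ⋯ γ_k θ a cycle in H of length at least 3. Let J be the gadget consisting of a cycle s v₁ ⋯ v_k s with pendant vertices u_i adjacent to v_i (pinned to γ_i) and a pendant vertex x adjacent to s (pinned to θ). Then every homomorphism σ : J → H with σ(u_i) = γ_i and σ(x) = θ satisfies σ(s) ∈ {γ₁, γ_k}. -/
/-- For the cycle vertex gadget built on a cycle `θ γ₁ … γ_k θ` (length ≥ 3, `θ = γ 0`) in a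
square-free graph, every homomorphism respecting the pins maps `s` into `{γ₁, γ_k}`. -/
theorem stmt9 {V : Type*} [Fintype V]
    (H : SimpleGraph V)
    (hsf : ∀ a b c d : V, a ≠ b → b ≠ c → c ≠ d → d ≠ a → a ≠ c → b ≠ d →
      ¬(H.Adj a b ∧ H.Adj b c ∧ H.Adj c d ∧ H.Adj d a))
    (k : ℕ) (hk : 2 ≤ k)
    (γ : ℕ → V)
    (hdist : ∀ i j, i ≤ k → j ≤ k → i ≠ j → γ i ≠ γ j)
    (hwalk : ∀ i < k, H.Adj (γ i) (γ (i + 1)))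
    (hclose : H.Adj (γ k) (γ 0))
    (σ : ℕ → V)
    (hadj : ∀ i < k, H.Adj (σ i) (σ (i + 1)))
    (hadjclose : H.Adj (σ k) (σ 0))
    (hpin : ∀ i, 1 ≤ i → i ≤ k → H.Adj (σ i) (γ i))
    (hx : H.Adj (σ 0) (γ 0)) :
    σ 0 = γ 1 ∨ σ 0 = γ k := by
  have key : ∀ a b c d : V, H.Adj a b → H.Adj b c → H.Adj c d → H.Adj d a →
      a = c ∨ b = d := by
    intro a b c d hab hbc hcd hda
    by_contra h
    push_neg at h
    exact hsf a b c d hab.ne hbc.ne hcd.ne hda.ne h.1 h.2 ⟨hab, hbc, hcd, hda⟩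
  by_contra hcon
  push_neg at hcon
  obtain ⟨h1, hk'⟩ := hcon
  have hb0 : σ 1 = γ 0 := by
    rcases key (σ 0) (σ 1) (γ 1) (γ 0) (hadj 0 (by omega))
      (hpin 1 le_rfl (by omega)) ((hwalk 0 (by omega)).symm) hx.symm with h | h
    · exact absurd h h1
    · exact h
  have main : ∀ i, 1 ≤ i → i ≤ k → σ i = γ (i - 1) := by
    intro i
    induction i with
    | zero => omega
    | succ n ih =>
      intro _ hle
      by_cases hn : n = 0
      · subst hn; simpa using hb0
      · have hn1 : 1 ≤ n := by omega
        have hσn : σ n = γ (n - 1) := ih hn1 (by omega)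
        rcases key (σ n) (σ (n + 1)) (γ (n + 1)) (γ n) (hadj n (by omega))
          (hpin (n + 1) (by omega) hle) ((hwalk n (by omega)).symm)
          (hpin n hn1 (by omega)).symm with h | h
        · exact absurd (hσn.symm.trans h) (hdist (n - 1) (n + 1) (by omega) hle (by omega))
        · simpa using h
  have hσk : σ k = γ (k - 1) := main k (by omega) le_rfl
  have hk0 : σ k = γ 0 := by
    rcases key (σ k) (σ 0) (γ 0) (γ k) hadjclose hx hclose.symm
      (hpin k (by omega) le_rfl).symm with h | h
    · exact h
    · exact absurd h hk'
  exact hdist (k - 1) 0 (by omega) (by omega) (by omega) (hσk.symm.trans hk0)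
end

section
/- Let H be a square-free graph, C = θ γ₁ ⋯ γ_k θ a cycle in H of length at least 3 with deg(γ_i) ≡ 1 (mod p) for all i ∈ [k], and K the gadget path s v₁ ⋯ v_k t with pendants u_i pinned to γ_i. Then the number of homomorphisms σ : K → H with σ(u_i) = γ_i, σ(s) = γ₁, and σ(t) = γ_k is congruent to 1 modulo p. -/
open Finset

section Gadget

variable {V : Type*} [Fintype V] [DecidableEq V]
  (H : SimpleGraph V) [DecidableRel H.Adj] (γ : ℕ → V)

/-- valid partial assignments to `v_1 … v_i`. -/
def GP (i : ℕ) (τ : Fin i → V) : Prop :=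
  (∀ j : Fin i, H.Adj (τ j) (γ ((j : ℕ) + 1))) ∧
  (∀ j l : Fin i, (l : ℕ) = (j : ℕ) + 1 → H.Adj (τ j) (τ l))

instance (i : ℕ) : DecidablePred (GP H γ i) := fun τ => by
  unfold GP; infer_instance

def gcnt (i : ℕ) (x : V) : ℕ :=
  (Finset.univ.filter fun τ : Fin (i + 1) → V =>
    GP H γ (i + 1) τ ∧ τ (Fin.last i) = x).card

lemma gcnt_zero (x : V) : gcnt H γ 0 x = if H.Adj x (γ 1) then 1 else 0 := by
  unfold gcnt
  split_ifs with h
  · rw [Finset.card_eq_one]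
    refine ⟨fun _ => x, ?_⟩
    ext τ
    simp only [mem_filter, mem_univ, true_and, Finset.mem_singleton]
    constructor
    · rintro ⟨-, hlast⟩
      funext j
      have hj : j = Fin.last 0 := by ext; omega
      rw [hj, hlast]
    · rintro rfl
      refine ⟨⟨fun j => ?_, fun j l hjl => ?_⟩, rfl⟩
      · have hj : (j : ℕ) = 0 := by omega
        simpa [hj] using h
      · have := j.isLt; have := l.isLt; omega
  · rw [Finset.card_eq_zero, Finset.filter_eq_empty_iff]
    rintro τ -
    rintro ⟨⟨h1, -⟩, hlast⟩
    exact h (hlast ▸ (by simpa using h1 (Fin.last 0)))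

lemma GP_snoc (i : ℕ) (τ : Fin (i + 1) → V) (y : V) :
    GP H γ (i + 2) (Fin.snoc τ y) ↔
      GP H γ (i + 1) τ ∧ H.Adj (τ (Fin.last i)) y ∧ H.Adj y (γ (i + 2)) := by
  constructor
  · rintro ⟨h1, h2⟩
    refine ⟨⟨fun j => ?_, fun j l hjl => ?_⟩, ?_, ?_⟩
    · simpa using h1 j.castSucc
    · simpa using h2 j.castSucc l.castSucc (by simpa using hjl)
    · simpa using h2 (Fin.castSucc (Fin.last i)) (Fin.last (i + 1)) (by simp)
    · simpa using h1 (Fin.last (i + 1))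
  · rintro ⟨⟨h1, h2⟩, hy, hyg⟩
    constructor
    · intro j
      induction j using Fin.lastCases with
      | last => simpa using hyg
      | cast j => simpa using h1 j
    · intro j l hjl
      induction l using Fin.lastCases with
      | last =>
        have hj : j = Fin.castSucc (Fin.last i) := by
          have := j.isLt
          ext
          simp only [Fin.val_last] at hjl
          simp only [Fin.coe_castSucc, Fin.val_last]
          omega
        subst hj
        simpa using hy
      | cast l =>
        induction j using Fin.lastCases with
        | last =>
          have := l.isLt
          simp only [Fin.coe_castSucc, Fin.val_last] at hjl
          omega
        | cast j =>
          simpa using h2 j l (by simpa using hjl)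

lemma gcnt_succ (i : ℕ) (x : V) :
    gcnt H γ (i + 1) x =
      ∑ z : V, if H.Adj z x ∧ H.Adj x (γ (i + 2)) then gcnt H γ i z else 0 := by
  have key : gcnt H γ (i + 1) x
      = ∑ τ : Fin (i + 1) → V,
          if GP H γ (i + 1) τ ∧ H.Adj (τ (Fin.last i)) x ∧ H.Adj x (γ (i + 2))
          then 1 else 0 := by
    unfold gcnt
    rw [Finset.card_filter,
      ← Equiv.sum_comp (Fin.snocEquiv (fun _ : Fin (i + 2) => V)), Fintype.sum_prod_type,
      Finset.sum_comm]
    refine Finset.sum_congr rfl fun τ _ => ?_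
    rw [Fintype.sum_eq_single x (fun y hy => ?_)]
    · have hfun : ((Fin.snocEquiv fun _ : Fin (i + 2) => V) (x, τ)) = Fin.snoc τ x := rfl
      rw [hfun, Fin.snoc_last]
      simp only [GP_snoc]
      by_cases hGP : GP H γ (i + 1) τ <;> by_cases ha : H.Adj (τ (Fin.last i)) x <;>
        by_cases hb : H.Adj x (γ (i + 2)) <;> simp [hGP, ha, hb, and_comm, and_assoc]
    · have hfun : ((Fin.snocEquiv fun _ : Fin (i + 2) => V) (y, τ)) = Fin.snoc τ y := rfl
      rw [hfun, Fin.snoc_last]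
      simp [hy]
  rw [key]
  have rhs : (∑ z : V, if H.Adj z x ∧ H.Adj x (γ (i + 2)) then gcnt H γ i z else 0)
      = ∑ τ : Fin (i + 1) → V, ∑ z : V,
          if GP H γ (i + 1) τ ∧ τ (Fin.last i) = z ∧ H.Adj z x ∧ H.Adj x (γ (i + 2))
          then 1 else 0 := by
    rw [Finset.sum_comm]
    refine Finset.sum_congr rfl fun z _ => ?_
    unfold gcnt
    rw [Finset.card_filter]
    split_ifs with h
    · refine Finset.sum_congr rfl fun τ _ => ?_
      by_cases hGP : GP H γ (i + 1) τ <;> by_cases hl : τ (Fin.last i) = z <;>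
        simp [hGP, hl, h]
    · refine (Finset.sum_eq_zero fun τ _ => ?_).symm
      rw [if_neg]
      tauto
  rw [rhs]
  refine Finset.sum_congr rfl fun τ _ => ?_
  rw [Fintype.sum_eq_single (τ (Fin.last i)) (fun z hz => ?_)]
  · by_cases hGP : GP H γ (i + 1) τ <;> simp [hGP]
  · rw [if_neg]
    rintro ⟨-, h, -⟩
    exact hz h.symm

end Gadget

section Reopen

variable {V : Type*} [Fintype V] [DecidableEq V]
  (H : SimpleGraph V) [DecidableRel H.Adj] (γ : ℕ → V)

lemma gcnt_mod (p k : ℕ)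
    (hsf : ∀ a b c d : V, a ≠ b → b ≠ c → c ≠ d → d ≠ a → a ≠ c → b ≠ d →
      ¬(H.Adj a b ∧ H.Adj b c ∧ H.Adj c d ∧ H.Adj d a))
    (hwalk : ∀ i < k, H.Adj (γ i) (γ (i + 1)))
    (hdeg : ∀ i, 1 ≤ i → i ≤ k → (H.degree (γ i) : ZMod p) = 1) :
    ∀ i, i + 1 ≤ k → ∀ x : V,
      (gcnt H γ i x : ZMod p) = if H.Adj x (γ (i + 1)) then 1 else 0 := by
  intro i
  induction i with
  | zero => intro _ x; rw [gcnt_zero]; split_ifs <;> simp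
  | succ i ih =>
    intro hik x
    rw [gcnt_succ, Nat.cast_sum]
    have h1 : (∑ z : V, ((if H.Adj z x ∧ H.Adj x (γ (i + 2)) then gcnt H γ i z else 0 : ℕ) : ZMod p))
        = ∑ z : V, if H.Adj z x ∧ H.Adj z (γ (i + 1)) ∧ H.Adj x (γ (i + 2))
            then (1 : ZMod p) else 0 := by
      refine Finset.sum_congr rfl fun z _ => ?_
      by_cases ha : H.Adj z x <;> by_cases hb : H.Adj x (γ (i + 2)) <;>
        by_cases hc : H.Adj z (γ (i + 1)) <;>
        simp [ha, hb, hc, ih (by omega) z]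
    rw [h1]
    by_cases hb : H.Adj x (γ (i + 2))
    · rw [if_pos hb]
      have h2 : (∑ z : V, if H.Adj z x ∧ H.Adj z (γ (i + 1)) ∧ H.Adj x (γ (i + 2))
            then (1 : ZMod p) else 0)
          = ∑ z : V, if H.Adj z x ∧ H.Adj z (γ (i + 1)) then (1 : ZMod p) else 0 := by
        refine Finset.sum_congr rfl fun z _ => ?_
        simp [hb]
      rw [h2, Finset.sum_boole]
      by_cases hx : x = γ (i + 1)
      · subst hx
        have h3 : (Finset.univ.filter fun z => H.Adj z (γ (i + 1)) ∧ H.Adj z (γ (i + 1)))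
            = H.neighborFinset (γ (i + 1)) := by
          ext z
          simp [SimpleGraph.adj_comm, and_self]
        rw [h3, SimpleGraph.card_neighborFinset_eq_degree]
        exact hdeg (i + 1) (by omega) (by omega)
      · have h3 : (Finset.univ.filter fun z => H.Adj z x ∧ H.Adj z (γ (i + 1)))
            = {γ (i + 2)} := by
          ext z
          simp only [mem_filter, mem_univ, true_and, Finset.mem_singleton]
          constructor
          · rintro ⟨ha, hc⟩
            by_contra hne
            exact hsf x z (γ (i + 1)) (γ (i + 2)) ha.ne' hc.ne
              (hwalk (i + 1) (by omega)).ne hb.ne' hx hne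
              ⟨ha.symm, hc, hwalk (i + 1) (by omega), hb.symm⟩
          · rintro rfl
            exact ⟨hb.symm, (hwalk (i + 1) (by omega)).symm⟩
        rw [h3]
        simp
    · rw [if_neg hb]
      refine Finset.sum_eq_zero fun z _ => ?_
      simp [hb]

lemma ncard_eq (m : ℕ) :
    (Set.ncard {σ : Fin (m + 1 + 2) → V |
      (∀ i : ℕ, (h : i < m + 1 + 1) →
        H.Adj (σ ⟨i, by omega⟩) (σ ⟨i + 1, by omega⟩)) ∧
      (∀ i : ℕ, 1 ≤ i → (h : i ≤ m + 1) → H.Adj (σ ⟨i, by omega⟩) (γ i)) ∧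
      σ 0 = γ 1 ∧ σ ⟨m + 1 + 1, by omega⟩ = γ (m + 1)})
      = ∑ x : V, gcnt H γ m x := by
  classical
  set F : (Fin (m + 1) → V) → (Fin (m + 1 + 2) → V) := fun τ i =>
    if h : (i : ℕ) ≤ m + 1 then
      (if (i : ℕ) = 0 then γ 1 else τ ⟨(i : ℕ) - 1, by omega⟩)
    else γ (m + 1) with hF
  have hFmid : ∀ (τ : Fin (m + 1) → V) (i : ℕ) (h1 : 1 ≤ i) (h2 : i ≤ m + 1)
      (hlt : i < m + 1 + 2), F τ ⟨i, hlt⟩ = τ ⟨i - 1, by omega⟩ := by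
    intro τ i h1 h2 hlt
    rw [hF]
    simp only [Fin.val_mk]
    rw [dif_pos h2, if_neg (by omega)]
  have hF0 : ∀ τ : Fin (m + 1) → V, F τ ⟨0, by omega⟩ = γ 1 := by
    intro τ
    rw [hF]
    simp
  have hFtop : ∀ (τ : Fin (m + 1) → V) (i : ℕ) (h2 : m + 1 < i)
      (hlt : i < m + 1 + 2), F τ ⟨i, hlt⟩ = γ (m + 1) := by
    intro τ i h2 hlt
    rw [hF]
    simp only [Fin.val_mk]
    rw [dif_neg (by omega)]
  have e : {σ : Fin (m + 1 + 2) → V //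
      (∀ i : ℕ, (h : i < m + 1 + 1) →
        H.Adj (σ ⟨i, by omega⟩) (σ ⟨i + 1, by omega⟩)) ∧
      (∀ i : ℕ, 1 ≤ i → (h : i ≤ m + 1) → H.Adj (σ ⟨i, by omega⟩) (γ i)) ∧
      σ 0 = γ 1 ∧ σ ⟨m + 1 + 1, by omega⟩ = γ (m + 1)} ≃
      {τ : Fin (m + 1) → V // GP H γ (m + 1) τ} := by
    refine ⟨fun σ => ⟨fun j => σ.1 ⟨(j : ℕ) + 1, by omega⟩, ?_⟩,
      fun τ => ⟨F τ.1, ?_⟩, ?_, ?_⟩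
    · obtain ⟨σ, hadj, hpen, h0, hlast⟩ := σ
      refine ⟨fun j => ?_, fun j l hjl => ?_⟩
      · exact hpen ((j : ℕ) + 1) (by omega) (by omega)
      · show H.Adj (σ ⟨(j : ℕ) + 1, by omega⟩) (σ ⟨(l : ℕ) + 1, by omega⟩)
        have hl : (⟨(l : ℕ) + 1, by omega⟩ : Fin (m + 1 + 2))
            = ⟨(j : ℕ) + 1 + 1, by omega⟩ := by
          simp only [Fin.mk.injEq]
          omega
        rw [hl]
        exact hadj ((j : ℕ) + 1) (by omega)
    · obtain ⟨τ, hτ1, hτ2⟩ := τ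
      refine ⟨fun i hi => ?_, fun i hi1 hi2 => ?_, ?_, ?_⟩
      · rcases Nat.eq_zero_or_pos i with rfl | hpos
        · rw [hF0, hFmid τ 1 (by omega) (by omega)]
          simpa using (hτ1 ⟨0, by omega⟩).symm
        · rcases Nat.lt_or_ge i (m + 1) with hlt | hge
          · rw [hFmid τ i (by omega) (by omega), hFmid τ (i + 1) (by omega) (by omega)]
            refine hτ2 ⟨i - 1, by omega⟩ ⟨i + 1 - 1, by omega⟩ ?_
            simp only [Fin.val_mk]
            omega
          · have hi' : i = m + 1 := by omega
            subst hi'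
            rw [hFmid τ (m + 1) (by omega) (by omega), hFtop τ (m + 2) (by omega)]
            have := hτ1 ⟨m + 1 - 1, by omega⟩
            simp only [Fin.val_mk] at this
            convert this using 2 <;> omega
      · rw [hFmid τ i hi1 hi2]
        have := hτ1 ⟨i - 1, by omega⟩
        simp only [Fin.val_mk] at this
        convert this using 2 <;> omega
      · show F τ 0 = γ 1
        rw [show (0 : Fin (m + 1 + 2)) = ⟨0, by omega⟩ from Fin.ext (by simp), hF0]
      · exact hFtop τ (m + 1 + 1) (by omega) (by omega)
    · rintro ⟨σ, hadj, hpen, h0, hlast⟩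
      apply Subtype.ext
      funext i
      show F _ i = σ i
      rcases Nat.eq_zero_or_pos (i : ℕ) with h0' | hpos
      · have hi : i = ⟨0, by omega⟩ := Fin.ext h0'
        rw [hi, hF0, ← h0]
        congr 1 <;> exact Fin.ext (by simp)
      · by_cases hle : (i : ℕ) ≤ m + 1
        · have hi : i = ⟨(i : ℕ), i.isLt⟩ := Fin.ext rfl
          rw [hi, hFmid _ (i : ℕ) hpos hle]
          show σ ⟨(i : ℕ) - 1 + 1, by omega⟩ = σ ⟨(i : ℕ), i.isLt⟩
          congr 1
          simp only [Fin.mk.injEq]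
          omega
        · have hi : i = ⟨(i : ℕ), i.isLt⟩ := Fin.ext rfl
          rw [hi, hFtop _ (i : ℕ) (by omega), ← hlast]
          congr 1
          simp only [Fin.mk.injEq]
          omega
    · rintro ⟨τ, hτ⟩
      apply Subtype.ext
      funext j
      show F τ ⟨(j : ℕ) + 1, by omega⟩ = τ j
      rw [hFmid τ ((j : ℕ) + 1) (by omega) (by omega)]
      congr 1 <;> (simp only [Fin.mk.injEq]; omega)
  have h1 : (Set.ncard {σ : Fin (m + 1 + 2) → V |
      (∀ i : ℕ, (h : i < m + 1 + 1) →
        H.Adj (σ ⟨i, by omega⟩) (σ ⟨i + 1, by omega⟩)) ∧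
      (∀ i : ℕ, 1 ≤ i → (h : i ≤ m + 1) → H.Adj (σ ⟨i, by omega⟩) (γ i)) ∧
      σ 0 = γ 1 ∧ σ ⟨m + 1 + 1, by omega⟩ = γ (m + 1)})
      = (Finset.univ.filter (GP H γ (m + 1))).card := by
    rw [← Nat.card_coe_set_eq, Set.coe_setOf, Nat.card_congr e,
      Nat.card_eq_fintype_card, Fintype.card_subtype]
  rw [h1]
  rw [Finset.card_eq_sum_card_fiberwise
    (f := fun τ => τ (Fin.last m)) (t := Finset.univ) (fun τ _ => Finset.mem_univ _)]
  refine Finset.sum_congr rfl fun x _ => ?_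
  rw [Finset.filter_filter]
  rfl

end Reopen

/-- For the edge gadget built on a cycle `θ γ₁ … γ_k θ` (length ≥ 3, `θ = γ 0`) in a
square-free graph, with `deg(γ_i) ≡ 1 (mod p)` for all `i ∈ [k]`, the number of homomorphisms
with `σ(s) = γ₁` and `σ(t) = γ_k` is congruent to 1 modulo `p`. -/
theorem stmt11 {V : Type*} [Fintype V] [DecidableEq V]
    (H : SimpleGraph V) [DecidableRel H.Adj]
    (p : ℕ) (hp : p.Prime)
    (hsf : ∀ a b c d : V, a ≠ b → b ≠ c → c ≠ d → d ≠ a → a ≠ c → b ≠ d →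
      ¬(H.Adj a b ∧ H.Adj b c ∧ H.Adj c d ∧ H.Adj d a))
    (k : ℕ) (hk : 2 ≤ k)
    (γ : ℕ → V)
    (hdist : ∀ i j, i ≤ k → j ≤ k → i ≠ j → γ i ≠ γ j)
    (hwalk : ∀ i < k, H.Adj (γ i) (γ (i + 1)))
    (hclose : H.Adj (γ k) (γ 0))
    (hdeg : ∀ i, 1 ≤ i → i ≤ k → (H.degree (γ i) : ZMod p) = 1) :
    (Set.ncard {σ : Fin (k + 2) → V |
      (∀ i : ℕ, (h : i < k + 1) →
        H.Adj (σ ⟨i, by omega⟩) (σ ⟨i + 1, by omega⟩)) ∧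
      (∀ i : ℕ, 1 ≤ i → (h : i ≤ k) → H.Adj (σ ⟨i, by omega⟩) (γ i)) ∧
      σ 0 = γ 1 ∧ σ ⟨k + 1, by omega⟩ = γ k} : ZMod p) = 1 := by
  obtain ⟨m, rfl⟩ : ∃ m, k = m + 1 := ⟨k - 1, by omega⟩
  rw [ncard_eq H γ m, Nat.cast_sum]
  have h1 : (∑ x : V, ((gcnt H γ m x : ℕ) : ZMod p))
      = ∑ x : V, if H.Adj x (γ (m + 1)) then (1 : ZMod p) else 0 := by
    refine Finset.sum_congr rfl fun x _ => ?_
    exact gcnt_mod H γ p (m + 1) hsf hwalk hdeg m (le_refl _) x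
  rw [h1, Finset.sum_boole]
  have h2 : (Finset.univ.filter fun x => H.Adj x (γ (m + 1)))
      = H.neighborFinset (γ (m + 1)) := by
    ext z
    simp [SimpleGraph.adj_comm]
  rw [h2, SimpleGraph.card_neighborFinset_eq_degree]
  exact hdeg (m + 1) (by omega) (le_refl _)
end

section
/- Let H be a square-free graph and C = θ γ₁ ⋯ γ_k θ a cycle of length at least 3 in H, and let K be the gadget path s v₁ ⋯ v_k t with pendants u_i pinned to γ_i (i ∈ [k]). Then for any ω_s ∈ N(θ) \ {γ₁} and ω_t ∈ N(θ) \ {γ_k}, there is no homomorphism σ : K → H with σ(u_i) = γ_i for all i, σ(s) = ω_s, and σ(t) = ω_t. -/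
/-- For the edge gadget built on a cycle `θ γ₁ … γ_k θ` (length ≥ 3, `θ = γ 0`) in a
square-free graph, there is no homomorphism sending `s` to `ω_s ∈ N(θ) \ {γ₁}` and `t` to
`ω_t ∈ N(θ) \ {γ_k}`. -/
theorem stmt17 {V : Type*} [Fintype V]
    (H : SimpleGraph V)
    (hsf : ∀ a b c d : V, a ≠ b → b ≠ c → c ≠ d → d ≠ a → a ≠ c → b ≠ d →
      ¬(H.Adj a b ∧ H.Adj b c ∧ H.Adj c d ∧ H.Adj d a))
    (k : ℕ) (hk : 2 ≤ k)
    (γ : ℕ → V)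
    (hdist : ∀ i j, i ≤ k → j ≤ k → i ≠ j → γ i ≠ γ j)
    (hwalk : ∀ i < k, H.Adj (γ i) (γ (i + 1)))
    (hclose : H.Adj (γ k) (γ 0))
    (ωs ωt : V)
    (hωs : H.Adj (γ 0) ωs) (hωs1 : ωs ≠ γ 1)
    (hωt : H.Adj (γ 0) ωt) (hωt1 : ωt ≠ γ k) :
    ¬∃ σ : ℕ → V,
      (∀ i < k + 1, H.Adj (σ i) (σ (i + 1))) ∧
      (∀ i, 1 ≤ i → i ≤ k → H.Adj (σ i) (γ i)) ∧
      σ 0 = ωs ∧ σ (k + 1) = ωt := by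
  rintro ⟨σ, hhom, hpin, hs, ht⟩
  -- square-free ⇒ in any 4-walk a-b-c-d-a, a = c or b = d
  have key : ∀ a b c d : V, H.Adj a b → H.Adj b c → H.Adj c d → H.Adj d a →
      a = c ∨ b = d := by
    intro a b c d hab hbc hcd hda
    by_contra h
    push_neg at h
    exact hsf a b c d hab.ne hbc.ne hcd.ne hda.ne h.1 h.2 ⟨hab, hbc, hcd, hda⟩
  -- σ 1 = γ 0
  have h1 : σ 1 = γ 0 := by
    have := key ωs (σ 1) (γ 1) (γ 0)
      (hs ▸ hhom 0 (by omega)) (hpin 1 le_rfl (by omega))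
      ((hwalk 0 (by omega)).symm) hωs
    rcases this with h | h
    · exact absurd h hωs1
    · exact h
  -- middle relation
  have mid : ∀ i, 1 ≤ i → i + 1 ≤ k → σ i = γ (i + 1) ∨ σ (i + 1) = γ i := by
    intro i h1i hik
    have := key (σ i) (γ i) (γ (i + 1)) (σ (i + 1))
      (hpin i h1i (by omega)) (hwalk i (by omega))
      ((hpin (i + 1) (by omega) hik).symm) ((hhom i (by omega)).symm)
    tauto
  -- claim: σ (i+1) = γ i for i ≤ k - 1
  have claim : ∀ i, i + 1 ≤ k → σ (i + 1) = γ i := by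
    intro i
    induction i with
    | zero => intro _; exact h1
    | succ n ih =>
      intro hn
      have hprev := ih (by omega)
      rcases mid (n + 1) (by omega) (by omega) with h | h
      · exact absurd (hprev ▸ h) (hdist n (n + 2) (by omega) (by omega) (by omega))
      · exact h
  -- σ k = γ 0 from the end
  have hke : σ k = γ 0 := by
    have := key ωt (σ k) (γ k) (γ 0)
      (ht ▸ (hhom k (by omega)).symm) (hpin k (by omega) le_rfl) hclose hωt
    rcases this with h | h
    · exact absurd h hωt1
    · exact h
  have hk2 : σ k = γ (k - 1) := by
    have := claim (k - 1) (by omega)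
    rwa [show k - 1 + 1 = k by omega] at this
  exact hdist (k - 1) 0 (by omega) (by omega) (by omega) (hk2 ▸ hke)
end
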